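/- Let n be a natural number and G ⊆ H be two subgroups of the symmetric group S_n on {0,…,n−1}. If for a ballean X the G-symmetric n-th power [X]^n_G is normal, then the H-symmetric n-th power [X]^n_H is normal, too. -/

import Mathlib

universe u v

open Set

/-- A ballean: a set `X` with a family of entourages satisfying the three axioms. -/
structure Ballean (X : Type u) : Type u where
  entourages : Set (Set (X × X))
  diag_mem : ∀ E ∈ entourages, ∀ x : X, (x, x) ∈ E
  comp_inv_sub : ∀ E ∈ entourages, ∀ F ∈ entourages, ∃ D ∈ entourages,
      {p : X × X | ∃ y : X, (p.1, y) ∈ E ∧ (p.2, y) ∈ F} ⊆ D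
  sUnion_eq_univ : ⋃₀ entourages = Set.univ

namespace Ballean

variable {X : Type u}

/-- The ball `E[x]` of radius `E` centered at `x`. -/
def ball (E : Set (X × X)) (x : X) : Set X := {y | (x, y) ∈ E}

/-- The `E`-neighborhood `E[A]` of a set `A`. -/
def img (E : Set (X × X)) (A : Set X) : Set X := {y | ∃ a ∈ A, (a, y) ∈ E}

/-- A subset is bounded if it is contained in some ball. -/
def IsBounded (B : Ballean X) (S : Set X) : Prop :=
  ∃ E ∈ B.entourages, ∃ x : X, S ⊆ ball E x

def Unbounded (B : Ballean X) : Prop := ¬ B.IsBounded Set.univ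

/-- Two sets are asymptotically disjoint if `E[A] ∩ E[C]` is bounded for all entourages. -/
def AsympDisjoint (B : Ballean X) (A C : Set X) : Prop :=
  ∀ E ∈ B.entourages, B.IsBounded (img E A ∩ img E C)

/-- `U` is an asymptotic neighborhood of `A` if `E[A] \ U` is bounded for all entourages. -/
def AsympNbhd (B : Ballean X) (A U : Set X) : Prop :=
  ∀ E ∈ B.entourages, B.IsBounded (img E A \ U)

/-- A ballean is normal if asymptotically disjoint sets have disjoint asymptotic
neighborhoods. -/
def Normal (B : Ballean X) : Prop :=
  ∀ A C : Set X, B.AsympDisjoint A C →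
    ∃ U V : Set X, B.AsympNbhd A U ∧ B.AsympNbhd C V ∧ Disjoint U V

/-- A ballean is ultranormal if it contains no two unbounded asymptotically disjoint sets. -/
def Ultranormal (B : Ballean X) : Prop :=
  ∀ A C : Set X, B.AsympDisjoint A C → B.IsBounded A ∨ B.IsBounded C

/-- A ballean is discrete if it is unbounded and every entourage acts trivially
outside a bounded set. -/
def Discrete (B : Ballean X) : Prop :=
  B.Unbounded ∧ ∀ E ∈ B.entourages, ∃ S : Set X, B.IsBounded S ∧
    ∀ x ∉ S, ball E x = {x}

/-- A ballean has bounded growth if there is a growth entourage `G`. -/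
def BoundedGrowth (B : Ballean X) : Prop :=
  ∃ G : Set (X × X),
    (∀ S : Set X, B.IsBounded S → B.IsBounded (img G S)) ∧
    (∀ E ∈ B.entourages, ∃ S : Set X, B.IsBounded S ∧ ∀ x ∉ S, ball E x ⊆ ball G x)

/-- The bornology of a ballean has a linearly ordered base. -/
def HasLinearBornBase (B : Ballean X) : Prop :=
  ∃ 𝒞 : Set (Set X), (∀ C ∈ 𝒞, B.IsBounded C) ∧
    (∀ C ∈ 𝒞, ∀ D ∈ 𝒞, C ⊆ D ∨ D ⊆ C) ∧
    ∀ S : Set X, B.IsBounded S → ∃ C ∈ 𝒞, S ⊆ C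

/-- The additivity of the bornology: the smallest cardinality of a family of bounded
sets with no bounded upper bound. -/
noncomputable def addBorn (B : Ballean X) : Cardinal.{u} :=
  sInf {c | ∃ 𝒜 : Set (Set X), (∀ A ∈ 𝒜, B.IsBounded A) ∧
    (¬ ∃ D : Set X, B.IsBounded D ∧ ∀ A ∈ 𝒜, A ⊆ D) ∧ c = Cardinal.mk ↥𝒜}

/-- The cofinality of the bornology: the smallest cardinality of a base of the bornology. -/
noncomputable def cofBorn (B : Ballean X) : Cardinal.{u} :=
  sInf {c | ∃ 𝒞 : Set (Set X), (∀ C ∈ 𝒞, B.IsBounded C) ∧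
    (∀ S : Set X, B.IsBounded S → ∃ C ∈ 𝒞, S ⊆ C) ∧ c = Cardinal.mk ↥𝒞}

/-- The cofinality of the family of entourages. -/
noncomputable def cofEnt (B : Ballean X) : Cardinal.{u} :=
  sInf {c | ∃ 𝒞 : Set (Set (X × X)), 𝒞 ⊆ B.entourages ∧
    (∀ E ∈ B.entourages, ∃ C ∈ 𝒞, E ⊆ C) ∧ c = Cardinal.mk ↥𝒞}

/-- A ballean is `cof`-regular if `cof(𝓔) = cof(B_X)`. -/
def CofRegular (B : Ballean X) : Prop := B.cofEnt = B.cofBorn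

end Ballean

/-- The entourages of the product of two balleans. -/
def prodEnt {X Y : Type u} (BX : Ballean X) (BY : Ballean Y) :
    Set (Set ((X × Y) × (X × Y))) :=
  {E | ∃ EX ∈ BX.entourages, ∃ EY ∈ BY.entourages,
    E = {p | (p.1.1, p.2.1) ∈ EX ∧ (p.1.2, p.2.2) ∈ EY}}

/-- The entourages of the box-product of a family of balleans. -/
def boxEnt {I : Type v} {X : I → Type u} (B : ∀ i, Ballean (X i)) :
    Set (Set ((∀ i, X i) × (∀ i, X i))) :=
  {E | ∃ F : ∀ i, Set (X i × X i), (∀ i, F i ∈ (B i).entourages) ∧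
    E = {p | ∀ i, (p.1 i, p.2 i) ∈ F i}}

/-- The entourages of the `n`-th power of a ballean. -/
def powEnt {X : Type u} (B : Ballean X) (n : ℕ) :
    Set (Set ((Fin n → X) × (Fin n → X))) :=
  {E | ∃ F : Fin n → Set (X × X), (∀ i, F i ∈ B.entourages) ∧
    E = {p | ∀ i, (p.1 i, p.2 i) ∈ F i}}

/-- The equivalence relation on `X^n` identifying `x` and `y` iff `y = x ∘ g` for some
permutation `g` in the subgroup `G` of `S_n`. -/
def permSetoid {X : Type u} (n : ℕ) (G : Subgroup (Equiv.Perm (Fin n))) :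
    Setoid (Fin n → X) where
  r x y := ∃ g ∈ G, y = x ∘ g
  iseqv := by
    refine ⟨fun x => ⟨1, G.one_mem, ?_⟩, ?_, ?_⟩
    · funext i; simp
    · rintro x y ⟨g, hg, rfl⟩
      exact ⟨g⁻¹, G.inv_mem hg, by funext i; simp⟩
    · rintro x y z ⟨g, hg, rfl⟩ ⟨h, hh, rfl⟩
      exact ⟨g * h, G.mul_mem hg hh, by funext i; simp⟩

/-- The underlying set of the `G`-symmetric `n`-th power `[X]^n_G`. -/
def SymPow (X : Type u) (n : ℕ) (G : Subgroup (Equiv.Perm (Fin n))) : Type u :=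
  Quotient (permSetoid (X := X) n G)

/-- The entourages of the `G`-symmetric `n`-th power `[X]^n_G`. -/
def symEnt {X : Type u} (B : Ballean X) (n : ℕ) (G : Subgroup (Equiv.Perm (Fin n))) :
    Set (Set (SymPow X n G × SymPow X n G)) :=
  {Eh | ∃ E ∈ powEnt B n,
    Eh = {p | ∃ x y : Fin n → X,
      p.1 = Quotient.mk (permSetoid n G) x ∧ p.2 = Quotient.mk (permSetoid n G) y ∧
      (x, y) ∈ E}}

namespace S7

variable {X : Type u} {n : ℕ}

lemma symm_ub (B : Ballean X) {E : Set (X × X)} (hE : E ∈ B.entourages) :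
    ∃ D ∈ B.entourages, E ⊆ D ∧ ∀ a b : X, (a, b) ∈ E → (b, a) ∈ D := by
  obtain ⟨D, hD, hsub⟩ := B.comp_inv_sub E hE E hE
  refine ⟨D, hD, ?_, ?_⟩
  · rintro ⟨a, b⟩ h
    exact hsub ⟨b, h, B.diag_mem E hE b⟩
  · intro a b h
    exact hsub ⟨b, B.diag_mem E hE b, h⟩

lemma ub2 (B : Ballean X) {E F : Set (X × X)} (hE : E ∈ B.entourages)
    (hF : F ∈ B.entourages) : ∃ D ∈ B.entourages, E ⊆ D ∧ F ⊆ D := by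
  obtain ⟨D, hD, hsub⟩ := B.comp_inv_sub E hE F hF
  obtain ⟨D₂, hD₂, hDsub, hDsymm⟩ := symm_ub B hD
  refine ⟨D₂, hD₂, fun p hp => hDsub (hsub ⟨p.2, hp, B.diag_mem F hF p.2⟩), ?_⟩
  rintro ⟨a, b⟩ h
  exact hDsymm b a (hsub ⟨b, B.diag_mem E hE b, h⟩)

lemma comp_ub (B : Ballean X) {E F : Set (X × X)} (hE : E ∈ B.entourages)
    (hF : F ∈ B.entourages) :
    ∃ D ∈ B.entourages, ∀ a m b : X, (a, m) ∈ E → (m, b) ∈ F → (a, b) ∈ D := by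
  obtain ⟨F', hF', _, hFs⟩ := symm_ub B hF
  obtain ⟨D, hD, hsub⟩ := B.comp_inv_sub E hE F' hF'
  exact ⟨D, hD, fun a m b h1 h2 => hsub ⟨m, h1, hFs m b h2⟩⟩

lemma finset_ub (B : Ballean X) (hne : B.entourages.Nonempty) {ι : Type v}
    (s : Finset ι) (f : ι → Set (X × X))
    (hf : ∀ i ∈ s, f i ∈ B.entourages) :
    ∃ D ∈ B.entourages, ∀ i ∈ s, f i ⊆ D := by
  classical
  induction s using Finset.induction_on with
  | empty => exact ⟨hne.choose, hne.choose_spec, by simp⟩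
  | insert a s hni ih =>
    obtain ⟨D, hD, hDs⟩ := ih (fun i hi => hf i (Finset.mem_insert_of_mem hi))
    obtain ⟨D', hD', h1, h2⟩ := ub2 B (hf a (Finset.mem_insert_self a s)) hD
    refine ⟨D', hD', ?_⟩
    intro i hi
    rcases Finset.mem_insert.mp hi with rfl | hi
    · exact h1
    · exact (hDs i hi).trans h2

lemma pairs_mem (B : Ballean X) (hne : B.entourages.Nonempty) (s : Finset (X × X)) :
    ∃ D ∈ B.entourages, ∀ p ∈ s, p ∈ D := by
  classical
  induction s using Finset.induction_on with
  | empty => exact ⟨hne.choose, hne.choose_spec, by simp⟩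
  | insert p s hni ih =>
    obtain ⟨D, hD, hDs⟩ := ih
    have hp : p ∈ ⋃₀ B.entourages := by rw [B.sUnion_eq_univ]; trivial
    obtain ⟨E, hE, hpE⟩ := hp
    obtain ⟨D', hD', h1, h2⟩ := ub2 B hE hD
    refine ⟨D', hD', ?_⟩
    intro q hq
    rcases Finset.mem_insert.mp hq with rfl | hq
    · exact h1 hpE
    · exact h2 (hDs q hq)

/-- The full cube entourage on the power. -/
def cube (n : ℕ) (F : Set (X × X)) : Set ((Fin n → X) × (Fin n → X)) :=
  {p | ∀ i, (p.1 i, p.2 i) ∈ F}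

lemma cube_mem_powEnt (B : Ballean X) {F : Set (X × X)} (hF : F ∈ B.entourages) :
    cube n F ∈ powEnt B n := ⟨fun _ => F, fun _ => hF, rfl⟩

/-- The entourage on the symmetric power induced by an entourage on the power. -/
def hat (n : ℕ) (K : Subgroup (Equiv.Perm (Fin n)))
    (E : Set ((Fin n → X) × (Fin n → X))) : Set (SymPow X n K × SymPow X n K) :=
  {p | ∃ x y : Fin n → X, p.1 = Quotient.mk (permSetoid n K) x ∧
      p.2 = Quotient.mk (permSetoid n K) y ∧ (x, y) ∈ E}

lemma hat_mem_symEnt (B : Ballean X) (K : Subgroup (Equiv.Perm (Fin n)))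
    {E : Set ((Fin n → X) × (Fin n → X))} (hE : E ∈ powEnt B n) :
    hat n K E ∈ symEnt B n K := ⟨E, hE, rfl⟩

/-- The canonical map `[X]^n_G → [X]^n_H` for `G ≤ H`. -/
def symMap {G H : Subgroup (Equiv.Perm (Fin n))} (hGH : G ≤ H) :
    SymPow X n G → SymPow X n H :=
  Quotient.lift (fun x => Quotient.mk (permSetoid n H) x)
    (fun _ _ hab => Quotient.sound ⟨hab.choose, hGH hab.choose_spec.1, hab.choose_spec.2⟩)

lemma hat_map {G H : Subgroup (Equiv.Perm (Fin n))} (hGH : G ≤ H)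
    {E : Set ((Fin n → X) × (Fin n → X))} {p : SymPow X n G × SymPow X n G}
    (hp : p ∈ hat n G E) : (symMap hGH p.1, symMap hGH p.2) ∈ hat n H E := by
  obtain ⟨x, y, hx, hy, hxy⟩ := hp
  exact ⟨x, y, by rw [hx]; rfl, by rw [hy]; rfl, hxy⟩

/-- Preimages under `symMap` of balls in `[X]^n_H` are bounded in `[X]^n_G`. -/
lemma ball_preimage_bounded (B : Ballean X) (hBne : B.entourages.Nonempty)
    {G H : Subgroup (Equiv.Perm (Fin n))} (hGH : G ≤ H)
    (QG : Ballean (SymPow X n G)) (hQG : QG.entourages = symEnt B n G)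
    {F : Set ((Fin n → X) × (Fin n → X))} (hF : F ∈ powEnt B n) (c : Fin n → X) :
    QG.IsBounded (symMap hGH ⁻¹'
      (Ballean.ball (hat n H F) (Quotient.mk (permSetoid n H) c))) := by
  classical
  obtain ⟨Fc, hFc, rfl⟩ := hF
  obtain ⟨Fs, hFs, hFsub⟩ := finset_ub B hBne Finset.univ Fc (fun i _ => hFc i)
  obtain ⟨D, hD, hDp⟩ := pairs_mem B hBne
    ((Finset.univ : Finset (Fin n × Equiv.Perm (Fin n))).image
      (fun q => (c q.1, c (q.2 q.1))))
  obtain ⟨D', hD', hcomp⟩ := comp_ub B hD hFs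
  refine ⟨hat n G (cube n D'),
    by rw [hQG]; exact hat_mem_symEnt B G (cube_mem_powEnt B hD'),
    Quotient.mk (permSetoid n G) c, ?_⟩
  intro w hw
  obtain ⟨y, rfl⟩ := Quotient.exists_rep w
  obtain ⟨x', y', hx', hy', hrel⟩ := hw
  have hy'' : Quotient.mk (permSetoid n H) y = Quotient.mk (permSetoid n H) y' := hy'
  obtain ⟨h₁, hh₁, rfl⟩ : ∃ g ∈ H, x' = c ∘ g := Quotient.exact hx'
  obtain ⟨h₂, hh₂, rfl⟩ : ∃ g ∈ H, y' = y ∘ g := Quotient.exact hy''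
  show (Quotient.mk (permSetoid n G) c, Quotient.mk (permSetoid n G) y)
      ∈ hat n G (cube n D')
  refine ⟨c, y, rfl, rfl, fun i => ?_⟩
  have key : (c (h₁ (h₂⁻¹ i)), y i) ∈ Fs := by
    have h3 := hrel (h₂⁻¹ i)
    simp only [Function.comp_apply, show h₂ (h₂⁻¹ i) = i from h₂.apply_symm_apply i] at h3
    exact hFsub _ (Finset.mem_univ _) h3
  exact hcomp _ _ _
    (hDp _ (Finset.mem_image.mpr ⟨(i, h₁ * h₂⁻¹), Finset.mem_univ _, rfl⟩)) key

end S7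

/-- STATEMENT 7: if `G ⊆ H` are subgroups of `S_n` and the `G`-symmetric `n`-th power
`[X]^n_G` of a ballean `X` is normal, then the `H`-symmetric `n`-th power `[X]^n_H` is
normal, too. -/
theorem statement7 {X : Type u} (B : Ballean X) {n : ℕ}
    (G H : Subgroup (Equiv.Perm (Fin n))) (hGH : G ≤ H)
    (QG : Ballean (SymPow X n G)) (hQG : QG.entourages = symEnt B n G)
    (QH : Ballean (SymPow X n H)) (hQH : QH.entourages = symEnt B n H)
    (hnorm : QG.Normal) :
    QH.Normal := by
  classical
  by_cases hQHne : QH.entourages.Nonempty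
  swap
  · intro A C _
    exact ⟨∅, ∅, fun E hE => absurd ⟨E, hE⟩ hQHne,
      fun E hE => absurd ⟨E, hE⟩ hQHne, by simp⟩
  rcases Nat.eq_zero_or_pos n with hn | hn
  · -- the case `n = 0`: everything is bounded
    subst hn
    obtain ⟨Eh, hEh⟩ := hQHne
    have hbd : ∀ S : Set (SymPow X 0 H), QH.IsBounded S := by
      intro S
      refine ⟨Eh, hEh, Quotient.mk (permSetoid 0 H) (fun i => i.elim0),
        fun w _ => ?_⟩
      obtain ⟨y, rfl⟩ := Quotient.exists_rep w
      have hEh' : Eh ∈ symEnt B 0 H := hQH ▸ hEh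
      obtain ⟨E, hE, rfl⟩ := hEh'
      obtain ⟨Fc, hFc, rfl⟩ := hE
      exact ⟨_, y, rfl, rfl, fun i => i.elim0⟩
    intro A C _
    exact ⟨Set.univ, ∅, fun E hE => hbd _, fun E hE => hbd _, by simp⟩
  -- the main case `0 < n`
  have hBne : B.entourages.Nonempty := by
    obtain ⟨Eh, hEh⟩ := hQHne
    rw [hQH] at hEh
    obtain ⟨E, ⟨Fc, hFc, _⟩, _⟩ := hEh
    exact ⟨Fc ⟨0, hn⟩, hFc _⟩
  intro A C hAC
  have step1 : QG.AsympDisjoint (S7.symMap hGH ⁻¹' A) (S7.symMap hGH ⁻¹' C) := by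
    intro Eg hEg
    rw [hQG] at hEg
    obtain ⟨E, hE, rfl⟩ := hEg
    have hEH : S7.hat n H E ∈ QH.entourages := by
      rw [hQH]; exact S7.hat_mem_symEnt B H hE
    obtain ⟨Fh, hFh, z₀, hz⟩ := hAC (S7.hat n H E) hEH
    rw [hQH] at hFh
    obtain ⟨F, hF, rfl⟩ := hFh
    obtain ⟨c, rfl⟩ := Quotient.exists_rep z₀
    obtain ⟨Dg, hDg, c₀, hsub⟩ := S7.ball_preimage_bounded B hBne hGH QG hQG hF c
    refine ⟨Dg, hDg, c₀, fun w hw => hsub ?_⟩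
    refine hz ⟨?_, ?_⟩
    · obtain ⟨a, ha, hrel⟩ := hw.1
      exact ⟨S7.symMap hGH a, ha, S7.hat_map hGH hrel⟩
    · obtain ⟨a, ha, hrel⟩ := hw.2
      exact ⟨S7.symMap hGH a, ha, S7.hat_map hGH hrel⟩
  obtain ⟨U, V, hU, hV, hUV⟩ := hnorm _ _ step1
  have step3 : ∀ (S : Set (SymPow X n H)) (W : Set (SymPow X n G)),
      QG.AsympNbhd (S7.symMap hGH ⁻¹' S) W →
      QH.AsympNbhd S {z | S7.symMap hGH ⁻¹' {z} ⊆ W} := by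
    intro S W hW Eh hEh
    rw [hQH] at hEh
    obtain ⟨E, hE, rfl⟩ := hEh
    obtain ⟨Ec, hEc, rfl⟩ := hE
    obtain ⟨Es, hEs, hEsub⟩ := S7.finset_ub B hBne Finset.univ Ec (fun i _ => hEc i)
    have hWb := hW (S7.hat n G (S7.cube n Es))
      (by rw [hQG]; exact S7.hat_mem_symEnt B G (S7.cube_mem_powEnt B hEs))
    obtain ⟨Fg, hFg, c₀, hb⟩ := hWb
    rw [hQG] at hFg
    obtain ⟨F, hF, rfl⟩ := hFg
    obtain ⟨c, rfl⟩ := Quotient.exists_rep c₀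
    refine ⟨S7.hat n H F, by rw [hQH]; exact S7.hat_mem_symEnt B H hF,
      Quotient.mk (permSetoid n H) c, ?_⟩
    rintro z ⟨hz1, hz2⟩
    obtain ⟨a, haS, hrel⟩ := hz1
    obtain ⟨x, y, hax, hzy, hxy⟩ := hrel
    rw [Set.mem_setOf_eq, Set.not_subset] at hz2
    obtain ⟨w, hwz, hwW⟩ := hz2
    obtain ⟨y'', rfl⟩ := Quotient.exists_rep w
    have hz'' : Quotient.mk (permSetoid n H) y'' = z := hwz
    have hyy : Quotient.mk (permSetoid n H) y'' = Quotient.mk (permSetoid n H) y := by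
      rw [hz'']; exact hzy
    obtain ⟨h, hh, hyh⟩ : ∃ g ∈ H, y = y'' ∘ g := Quotient.exact hyy
    have hy'' : y'' = y ∘ ⇑(h⁻¹) := by
      funext i
      rw [hyh]
      simp
    have hmem : Quotient.mk (permSetoid n G) (x ∘ ⇑(h⁻¹)) ∈ S7.symMap hGH ⁻¹' S := by
      have heq : S7.symMap hGH (Quotient.mk (permSetoid n G) (x ∘ ⇑(h⁻¹)))
          = Quotient.mk (permSetoid n H) x := by
        show Quotient.mk (permSetoid n H) (x ∘ ⇑(h⁻¹)) = Quotient.mk (permSetoid n H) x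
        refine Quotient.sound ⟨h, hh, ?_⟩
        funext i
        simp
      show S7.symMap hGH _ ∈ S
      rw [heq, ← hax]
      exact haS
    have hrelG : (Quotient.mk (permSetoid n G) (x ∘ ⇑(h⁻¹)),
        Quotient.mk (permSetoid n G) y'') ∈ S7.hat n G (S7.cube n Es) := by
      refine ⟨x ∘ ⇑(h⁻¹), y'', rfl, rfl, fun i => ?_⟩
      rw [hy'']
      exact hEsub _ (Finset.mem_univ _) (hxy (h⁻¹ i))
    have hball := hb ⟨⟨_, hmem, hrelG⟩, hwW⟩
    have hpair : ((Quotient.mk (permSetoid n G) c : SymPow X n G),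
        Quotient.mk (permSetoid n G) y'') ∈ S7.hat n G F := hball
    show (Quotient.mk (permSetoid n H) c, z) ∈ S7.hat n H F
    rw [← hz'']
    exact S7.hat_map hGH hpair
  refine ⟨_, _, step3 A U hU, step3 C V hV, ?_⟩
  rw [Set.disjoint_left]
  intro z h1 h2
  obtain ⟨y, rfl⟩ := Quotient.exists_rep z
  have hyU : Quotient.mk (permSetoid n G) y ∈ U := h1 rfl
  have hyV : Quotient.mk (permSetoid n G) y ∈ V := h2 rfl
  exact Set.disjoint_left.mp hUV hyU hyV
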